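/- Let B ∈ ℤ^{s×r} and let T ⊆ ℝ^s be the column span of B. The monomial map φ(x) = x^B on ℝ^s_{>0} fails to be injective on some coset (x⁰ + S) ∩ ℝ^s_{>0} (for some x⁰ ∈ ℝ^s_{>0}) if and only if there exist nonzero vectors v ∈ T^⊥ and w ∈ S with sign(v) = sign(w) (coordinatewise). -/

import Mathlib

lemma exp_zpow' (x : ℝ) (n : ℤ) : Real.exp x ^ n = Real.exp (n * x) := by
  rw [← Real.rpow_intCast, Real.rpow_def_of_pos (Real.exp_pos x), Real.log_exp, mul_comm]

lemma sign_log_sub {a b : ℝ} (ha : 0 < a) (hb : 0 < b) :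
    Real.sign (Real.log b - Real.log a) = Real.sign (b - a) := by
  rcases lt_trichotomy a b with h | h | h
  · rw [Real.sign_of_pos (sub_pos.2 ((Real.log_lt_log_iff ha hb).2 h)),
      Real.sign_of_pos (sub_pos.2 h)]
  · simp [h]
  · rw [Real.sign_of_neg (sub_neg.2 ((Real.log_lt_log_iff hb ha).2 h)),
      Real.sign_of_neg (sub_neg.2 h)]

lemma neg_of_sign_eq_neg_one {x : ℝ} (h : Real.sign x = -1) : x < 0 := by
  rcases lt_trichotomy x 0 with h' | h' | h'
  · exact h'
  · rw [h', Real.sign_zero] at h; norm_num at h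
  · rw [Real.sign_of_pos h'] at h; norm_num at h

lemma pos_of_sign_eq_one {x : ℝ} (h : Real.sign x = 1) : 0 < x := by
  rcases lt_trichotomy x 0 with h' | h' | h'
  · rw [Real.sign_of_neg h'] at h; norm_num at h
  · rw [h', Real.sign_zero] at h; norm_num at h
  · exact h'

/-- the monomial map `x ↦ x^B` fails to be injective on some
coset `(x⁰ + S) ∩ ℝ^s_{>0}` iff there are nonzero `v ∈ T^⊥` and `w ∈ S` with
the same sign vector, where `T` is the column span of `B`. -/
theorem stmt11 {s r : ℕ} (B : Matrix (Fin s) (Fin r) ℤ)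
    (S T : Submodule ℝ (EuclideanSpace ℝ (Fin s)))
    (hT : T = Submodule.span ℝ
      (Set.range fun j : Fin r => (WithLp.toLp 2 (fun i => (B i j : ℝ)) : EuclideanSpace ℝ (Fin s)))) :
    (∃ x0 x1 x2 : EuclideanSpace ℝ (Fin s),
      (∀ i, 0 < x0 i) ∧ (∀ i, 0 < x1 i) ∧ (∀ i, 0 < x2 i) ∧ x1 ≠ x2 ∧
      x1 - x0 ∈ S ∧ x2 - x0 ∈ S ∧
      ∀ j, (∏ i, x1 i ^ B i j) = ∏ i, x2 i ^ B i j) ↔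
    (∃ v ∈ Tᗮ, ∃ w ∈ S, v ≠ 0 ∧ w ≠ 0 ∧
      ∀ i, Real.sign (v i) = Real.sign (w i)) := by
  constructor
  · rintro ⟨x0, x1, x2, h0, h1, h2, hne, hS1, hS2, hprod⟩
    set v : EuclideanSpace ℝ (Fin s) :=
      WithLp.toLp 2 (fun i => Real.log (x2 i) - Real.log (x1 i)) with hv_def
    have hlog : ∀ j, ∑ i, (B i j : ℝ) * Real.log (x1 i)
        = ∑ i, (B i j : ℝ) * Real.log (x2 i) := by
      intro j
      have h := congrArg Real.log (hprod j)
      rw [Real.log_prod (fun i _ => zpow_ne_zero _ (h1 i).ne'),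
        Real.log_prod (fun i _ => zpow_ne_zero _ (h2 i).ne')] at h
      simpa [Real.log_zpow] using h
    have hsum : ∀ j, ∑ i, (B i j : ℝ) * v i = 0 := by
      intro j
      have : ∑ i, (B i j : ℝ) * v i
          = (∑ i, (B i j : ℝ) * Real.log (x2 i))
            - ∑ i, (B i j : ℝ) * Real.log (x1 i) := by
        rw [← Finset.sum_sub_distrib]
        exact Finset.sum_congr rfl fun i _ => by simp [hv_def, mul_sub]
      rw [this, ← hlog j, sub_self]
    refine ⟨v, ?_, x2 - x1, ?_, ?_, ?_, ?_⟩
    · rw [hT, Submodule.mem_orthogonal]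
      intro u hu
      induction hu using Submodule.span_induction with
      | mem u hu =>
        obtain ⟨j, rfl⟩ := hu
        simpa [PiLp.inner_apply, RCLike.inner_apply, mul_comm] using hsum j
      | zero => simp
      | add a b _ _ ha hb => rw [inner_add_left, ha, hb, add_zero]
      | smul c a _ ha => rw [real_inner_smul_left, ha, mul_zero]
    · have := S.sub_mem hS2 hS1
      rwa [sub_sub_sub_cancel_right] at this
    · intro h
      apply hne
      ext i
      have hvi : v i = 0 := by rw [h]; rfl
      have : Real.log (x1 i) = Real.log (x2 i) := by
        have := sub_eq_zero.mp hvi; linarith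
      exact (Real.log_injOn_pos (Set.mem_Ioi.2 (h1 i)) (Set.mem_Ioi.2 (h2 i)) this)
    · intro h
      exact hne (sub_eq_zero.mp h).symm
    · intro i
      have : (x2 - x1 : EuclideanSpace ℝ (Fin s)) i = x2 i - x1 i := rfl
      rw [this]
      exact sign_log_sub (h1 i) (h2 i)
  · rintro ⟨v, hv, w, hw, hv0, hw0, hsign⟩
    classical
    set x1 : EuclideanSpace ℝ (Fin s) :=
      WithLp.toLp 2 (fun i => if v i = 0 then 1 else w i / (Real.exp (v i) - 1)) with hx1_def
    set x2 : EuclideanSpace ℝ (Fin s) := WithLp.toLp 2 (fun i => Real.exp (v i) * x1 i) with hx2_def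
    have hx1pos : ∀ i, 0 < x1 i := by
      intro i
      by_cases h : v i = 0
      · simp [hx1_def, h]
      · have : x1 i = w i / (Real.exp (v i) - 1) := by simp [hx1_def, h]
        rw [this]
        rcases Ne.lt_or_gt h with hlt | hgt
        · have hwneg : w i < 0 := by
            apply neg_of_sign_eq_neg_one
            rw [← hsign i, Real.sign_of_neg hlt]
          have hdneg : Real.exp (v i) - 1 < 0 := by
            have := Real.exp_lt_exp.2 hlt
            rw [Real.exp_zero] at this; linarith
          exact div_pos_of_neg_of_neg hwneg hdneg
        · have hwpos : 0 < w i := by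
            apply pos_of_sign_eq_one
            rw [← hsign i, Real.sign_of_pos hgt]
          have hdpos : 0 < Real.exp (v i) - 1 := by
            have := Real.exp_lt_exp.2 hgt
            rw [Real.exp_zero] at this; linarith
          exact div_pos hwpos hdpos
    have hx2pos : ∀ i, 0 < x2 i := fun i => mul_pos (Real.exp_pos _) (hx1pos i)
    have hdiff : ∀ i, x2 i - x1 i = w i := by
      intro i
      by_cases h : v i = 0
      · have hwi : w i = 0 := by
          apply Real.sign_eq_zero_iff.1
          rw [← hsign i, h, Real.sign_zero]
        simp [hx2_def, hx1_def, h, hwi]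
      · have hne1 : Real.exp (v i) - 1 ≠ 0 := by
          intro he
          exact h ((Real.exp_eq_one_iff _).1 (by linarith))
        have hx1i : x1 i = w i / (Real.exp (v i) - 1) := by simp [hx1_def, h]
        rw [hx2_def]
        show Real.exp (v i) * x1 i - x1 i = w i
        rw [hx1i]
        field_simp
    have hx12 : (x2 - x1 : EuclideanSpace ℝ (Fin s)) = w := by
      ext i
      exact hdiff i
    have hexi : ∃ i, v i ≠ 0 := by
      by_contra h
      push_neg at h
      exact hv0 (PiLp.ext h)
    refine ⟨x1, x1, x2, hx1pos, hx1pos, hx2pos, ?_, by simp [S.zero_mem], ?_, ?_⟩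
    · obtain ⟨i, hi⟩ := hexi
      intro he
      have h1 : x1 i = x2 i := congrFun (congrArg WithLp.ofLp he) i
      have h2 : x2 i = Real.exp (v i) * x1 i := rfl
      have h3 : Real.exp (v i) * x1 i = 1 * x1 i := by
        rw [one_mul, ← h2, ← h1]
      exact hi ((Real.exp_eq_one_iff _).1 (mul_right_cancel₀ (hx1pos i).ne' h3))
    · rw [hx12]; exact hw
    · intro j
      have hcol : (WithLp.toLp 2 (fun i => (B i j : ℝ)) : EuclideanSpace ℝ (Fin s)) ∈ T :=
        hT ▸ Submodule.subset_span ⟨j, rfl⟩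
      have hinner : ∑ i, (B i j : ℝ) * v i = 0 := by
        have := (Submodule.mem_orthogonal T v).1 hv _ hcol
        simpa [PiLp.inner_apply, RCLike.inner_apply, mul_comm] using this
      have : (∏ i, x2 i ^ B i j) = (∏ i, Real.exp (v i) ^ B i j) * ∏ i, x1 i ^ B i j := by
        rw [← Finset.prod_mul_distrib]
        exact Finset.prod_congr rfl fun i _ => by rw [hx2_def]; exact mul_zpow _ _ _
      rw [this]
      have : (∏ i, Real.exp (v i) ^ B i j) = 1 := by
        simp_rw [exp_zpow']
        rw [← Real.exp_sum, hinner, Real.exp_zero]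
      rw [this, one_mul]
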